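/- If nonempty domains D_x, D_y, D_z ⊆ {0,1} for the AND constraint are closed under the rule AND 1' (if D_x = {1} then the constraint reduces so that D_y = D_z), then D_x = {1} implies D_y = D_z; moreover closure under all BOOL' AND rules implies hyper-arc consistency of the AND constraint. -/
import Mathlib

lemma setBool_cases (D : Set Bool) (h : D.Nonempty) :
    D = {false} ∨ D = {true} ∨ D = Set.univ := by
  by_cases ht : true ∈ D <;> by_cases hf : false ∈ D
  · right; right; ext b; cases b <;> simp [ht, hf]
  · right; left; ext b; cases b <;> simp [ht, hf]
  · left; ext b; cases b <;> simp [ht, hf]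
  · exfalso; obtain ⟨b, hb⟩ := h; cases b <;> tauto

/-- If nonempty domains for the AND constraint are closed under the BOOL' AND rules
(AND 1': Dx = {1} → Dy = Dz; AND 2': Dy = {1} → Dx = Dz; AND 3'/6': Dz = {1} →
Dx = {1} ∧ Dy = {1}; AND 4: Dx = {0} → Dz = {0}; AND 5: Dy = {0} → Dz = {0}),
then Dx = {1} implies Dy = Dz, and the AND constraint is hyper-arc consistent. -/
theorem boolprime_and_closure_implies_hyperarc (Dx Dy Dz : Set Bool)
    (hx : Dx.Nonempty) (hy : Dy.Nonempty) (hz : Dz.Nonempty)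
    (h1 : Dx = {true} → Dy = Dz)
    (h2 : Dy = {true} → Dx = Dz)
    (h3 : Dz = {true} → Dx = {true} ∧ Dy = {true})
    (h4 : Dx = {false} → Dz = {false})
    (h5 : Dy = {false} → Dz = {false}) :
    (Dx = {true} → Dy = Dz) ∧
    ((∀ a ∈ Dx, ∃ b ∈ Dy, ∃ c ∈ Dz, (a && b) = c) ∧
     (∀ b ∈ Dy, ∃ a ∈ Dx, ∃ c ∈ Dz, (a && b) = c) ∧
     (∀ c ∈ Dz, ∃ a ∈ Dx, ∃ b ∈ Dy, (a && b) = c)) := by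
  refine ⟨h1, ?_⟩
  rcases setBool_cases Dx hx with rfl | rfl | rfl <;>
  rcases setBool_cases Dy hy with rfl | rfl | rfl <;>
  rcases setBool_cases Dz hz with rfl | rfl | rfl <;>
    simp only [Set.ext_iff, Set.mem_singleton_iff, Set.mem_univ] at h1 h2 h3 h4 h5 ⊢ <;>
    first
      | decide
      | (exfalso; first
          | (have h := h1 (by decide); revert h; decide)
          | (have h := h2 (by decide); revert h; decide)
          | (have h := h3 (by decide); revert h; decide)
          | (have h := h4 (by decide); revert h; decide)
          | (have h := h5 (by decide); revert h; decide))
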